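/- For every α > 0 and θ > 2, there exists a square-summable coefficient array that satisfies both the condition B^{α/(1+2α)}_{2,∞} and the weak Besov condition W_{2/(1+2α)} but does not satisfy the condition A^α_θ. Consequently the intersection of the classes B^{α/(1+2α)}_{2,∞} and W_{2/(1+2α)} is not contained in the class A^α_θ. -/

import Mathlib

open scoped BigOperators

/-- A coefficient array `β` is square-summable if `Σ_{j,k} β_{j,k}² < ∞`. -/
def SqSummable (β : ℕ → ℕ → ℝ) : Prop :=
  Summable fun j : ℕ => ∑ k ∈ Finset.range (2 ^ j), (β j k) ^ 2

/-- The condition `B^{α/(1+2α)}_{2,∞}`. -/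
def CondB2 (β : ℕ → ℕ → ℝ) (α : ℝ) : Prop :=
  ∃ C : ℝ, ∀ J : ℕ,
    (2 : ℝ) ^ (2 * (J : ℝ) * α / (1 + 2 * α)) *
      ∑' j : ℕ, (if J ≤ j then ∑ k ∈ Finset.range (2 ^ j), (β j k) ^ 2 else 0) ≤ C

/-- The weak Besov condition `W_{2/(1+2α)}`. -/
def CondW (β : ℕ → ℕ → ℝ) (α : ℝ) : Prop :=
  ∃ C : ℝ, ∀ u : ℝ, 0 < u →
    {q : ℕ × ℕ | q.2 < 2 ^ q.1 ∧ u < |β q.1 q.2|}.Finite ∧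
      u ^ (2 / (1 + 2 * α)) *
        ({q : ℕ × ℕ | q.2 < 2 ^ q.1 ∧ u < |β q.1 q.2|}.ncard : ℝ) ≤ C

/-- `N(J,j) = min(⌊2^J (j−J+1)^{−θ}⌋, 2^j)`. -/
noncomputable def NJj (θ : ℝ) (J j : ℕ) : ℕ :=
  min ⌊(2 : ℝ) ^ J * ((j : ℝ) - (J : ℝ) + 1) ^ (-θ)⌋₊ (2 ^ j)

/-- `t_{j,J}(β)`: the minimum over subsets `A` of `{0,…,2^j−1}` of cardinality `N(J,j)`
of `Σ_{k ∉ A} β_{j,k}²`, i.e. the sum of squares of all but the `N(J,j)` largest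
`|β_{j,k}|` at level `j`. -/
noncomputable def tTail (β : ℕ → ℕ → ℝ) (θ : ℝ) (J j : ℕ) : ℝ :=
  sInf {x : ℝ | ∃ A : Finset ℕ, A ⊆ Finset.range (2 ^ j) ∧ A.card = NJj θ J j ∧
    x = ∑ k ∈ Finset.range (2 ^ j) \ A, (β j k) ^ 2}

/-- The condition `A^α_θ`. -/
def CondA (β : ℕ → ℕ → ℝ) (α θ : ℝ) : Prop :=
  ∃ C : ℝ, ∀ J : ℕ,
    (2 : ℝ) ^ (2 * (J : ℝ) * α) *
      ∑' j : ℕ, (if J ≤ j then tTail β θ J j else 0) ≤ C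



namespace Stmt18Aux

noncomputable def mfun (α : ℝ) (j : ℕ) : ℕ := ⌊(2:ℝ) ^ ((j:ℝ)/(1+2*α))⌋₊

noncomputable def bb (α : ℝ) (j k : ℕ) : ℝ :=
  if k < mfun α j then (2:ℝ) ^ (-(j:ℝ)/2) else 0

variable {α : ℝ}

lemma hp0 (hα : 0 < α) : (0:ℝ) < 1 + 2*α := by linarith

lemma mfun_le_rpow (hα : 0 < α) (j : ℕ) : (mfun α j : ℝ) ≤ (2:ℝ) ^ ((j:ℝ)/(1+2*α)) :=
  Nat.floor_le (by positivity)

lemma mfun_le (hα : 0 < α) (j : ℕ) : mfun α j ≤ 2 ^ j := by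
  have h1 : (2:ℝ) ^ ((j:ℝ)/(1+2*α)) ≤ ((2^j : ℕ) : ℝ) := by
    have : (2:ℝ) ^ ((j:ℝ)/(1+2*α)) ≤ (2:ℝ) ^ ((j:ℝ)) := by
      apply Real.rpow_le_rpow_of_exponent_le one_le_two
      rw [div_le_iff₀ (hp0 hα)]
      nlinarith [Nat.cast_nonneg (α := ℝ) j]
    calc (2:ℝ) ^ ((j:ℝ)/(1+2*α)) ≤ (2:ℝ) ^ ((j:ℝ)) := this
      _ = ((2^j : ℕ) : ℝ) := by rw [Real.rpow_natCast]; push_cast; ring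
  calc mfun α j ≤ ⌊((2^j : ℕ) : ℝ)⌋₊ := Nat.floor_le_floor h1
    _ = 2 ^ j := Nat.floor_natCast _

lemma mfun_pos (hα : 0 < α) (j : ℕ) : 1 ≤ mfun α j := by
  have h : (1:ℝ) ≤ (2:ℝ) ^ ((j:ℝ)/(1+2*α)) := by
    apply Real.one_le_rpow one_le_two
    positivity
  exact (Nat.one_le_floor_iff _).mpr h

lemma sq_val (j : ℕ) : ((2:ℝ) ^ (-(j:ℝ)/2)) ^ 2 = (2:ℝ) ^ (-(j:ℝ)) := by
  rw [← Real.rpow_natCast ((2:ℝ) ^ (-(j:ℝ)/2)) 2, ← Real.rpow_mul (by norm_num : (0:ℝ) ≤ 2)]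
  norm_num

lemma sum_sq (hα : 0 < α) (j : ℕ) :
    ∑ k ∈ Finset.range (2^j), (bb α j k) ^ 2 = (mfun α j : ℝ) * (2:ℝ) ^ (-(j:ℝ)) := by
  have h1 : ∀ k, (bb α j k) ^ 2 = if k ∈ Finset.range (mfun α j) then (2:ℝ) ^ (-(j:ℝ)) else 0 := by
    intro k
    simp only [bb, Finset.mem_range]
    split_ifs
    · exact sq_val j
    · simp
  rw [Finset.sum_congr rfl (fun k _ => h1 k), Finset.sum_ite_mem,
    Finset.inter_eq_right.mpr (Finset.range_subset_range.mpr (mfun_le hα j)),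
    Finset.sum_const, Finset.card_range, nsmul_eq_mul]

/-- the geometric ratio -/
noncomputable def rr (α : ℝ) : ℝ := (2:ℝ) ^ (-(2*α/(1+2*α)))

lemma rr_pos (hα : 0 < α) : 0 < rr α := Real.rpow_pos_of_pos two_pos _

lemma rr_lt_one (hα : 0 < α) : rr α < 1 := by
  apply Real.rpow_lt_one_of_one_lt_of_neg one_lt_two
  have := hp0 hα
  have : 0 < 2*α/(1+2*α) := by positivity
  linarith

lemma rr_pow (hα : 0 < α) (j : ℕ) : rr α ^ j = (2:ℝ) ^ (-(2*α/(1+2*α)) * (j:ℝ)) := by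
  rw [rr, ← Real.rpow_natCast ((2:ℝ) ^ (-(2*α/(1+2*α)))) j,
    ← Real.rpow_mul (by norm_num : (0:ℝ) ≤ 2)]

lemma sum_sq_le (hα : 0 < α) (j : ℕ) :
    ∑ k ∈ Finset.range (2^j), (bb α j k) ^ 2 ≤ rr α ^ j := by
  rw [sum_sq hα j, rr_pow hα j]
  have h1 : (mfun α j : ℝ) * (2:ℝ) ^ (-(j:ℝ)) ≤
      (2:ℝ) ^ ((j:ℝ)/(1+2*α)) * (2:ℝ) ^ (-(j:ℝ)) := by
    apply mul_le_mul_of_nonneg_right (mfun_le_rpow hα j) (le_of_lt (Real.rpow_pos_of_pos two_pos _))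
  refine h1.trans (le_of_eq ?_)
  rw [← Real.rpow_add two_pos]
  congr 1
  have h0 := hp0 hα
  field_simp
  ring

lemma sum_sq_nonneg (j : ℕ) : 0 ≤ ∑ k ∈ Finset.range (2^j), (bb α j k) ^ 2 :=
  Finset.sum_nonneg fun k _ => sq_nonneg _

/-- summability of the level sums -/
lemma sq_summable (hα : 0 < α) :
    Summable (fun j : ℕ => ∑ k ∈ Finset.range (2^j), (bb α j k) ^ 2) :=
  Summable.of_nonneg_of_le (fun j => sum_sq_nonneg j) (fun j => sum_sq_le hα j)
    (summable_geometric_of_lt_one (rr_pos hα).le (rr_lt_one hα))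

/-- tail tsum bound for ite-truncated series dominated by a geometric -/
lemma tsum_ite_le_geom {r : ℝ} (h0 : 0 ≤ r) (h1 : r < 1) (g : ℕ → ℝ)
    (hg0 : ∀ j, 0 ≤ g j) (hg : ∀ j, g j ≤ r ^ j) (J : ℕ) :
    ∑' j : ℕ, (if J ≤ j then g j else 0) ≤ r ^ J / (1 - r) := by
  have hgeom : Summable (fun j : ℕ => r ^ j) := summable_geometric_of_lt_one h0 h1
  have hfr : Summable (fun j : ℕ => if J ≤ j then r ^ j else 0) := by
    apply Summable.of_nonneg_of_le (fun j => ?_) (fun j => ?_) hgeom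
    · split_ifs <;> positivity
    · split_ifs with h
      · exact le_rfl
      · positivity
  have hf : Summable (fun j : ℕ => if J ≤ j then g j else 0) := by
    apply Summable.of_nonneg_of_le (fun j => ?_) (fun j => ?_) hgeom
    · split_ifs with h
      · exact hg0 j
      · exact le_rfl
    · split_ifs with h
      · exact hg j
      · positivity
  have hle : ∑' j : ℕ, (if J ≤ j then g j else 0) ≤ ∑' j : ℕ, (if J ≤ j then r ^ j else 0) := by
    apply Summable.tsum_le_tsum _ hf hfr
    intro j
    split_ifs with h
    · exact hg j
    · exact le_rfl
  refine hle.trans (le_of_eq ?_)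
  have h2 := Summable.sum_add_tsum_nat_add (f := fun j : ℕ => if J ≤ j then r ^ j else 0) J hfr
  have h3 : ∑ i ∈ Finset.range J, (if J ≤ i then r ^ i else 0) = 0 := by
    apply Finset.sum_eq_zero
    intro i hi
    simp only [Finset.mem_range] at hi
    rw [if_neg (by omega)]
  have h4 : (fun i : ℕ => if J ≤ i + J then r ^ (i + J) else 0) = fun i : ℕ => r ^ i * r ^ J := by
    funext i
    rw [if_pos (Nat.le_add_left J i), pow_add]
  rw [← h2, h3, zero_add, h4, tsum_mul_right, tsum_geometric_of_lt_one h0 h1,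
    div_eq_inv_mul, mul_comm]

lemma condB2_bound (hα : 0 < α) (J : ℕ) :
    (2 : ℝ) ^ (2 * (J : ℝ) * α / (1 + 2 * α)) *
      ∑' j : ℕ, (if J ≤ j then ∑ k ∈ Finset.range (2 ^ j), (bb α j k) ^ 2 else 0) ≤
      (1 - rr α)⁻¹ := by
  have htail := tsum_ite_le_geom (rr_pos hα).le (rr_lt_one hα) _
    (fun j => sum_sq_nonneg (α := α) j) (fun j => sum_sq_le hα j) J
  have hpow : (0:ℝ) < (2 : ℝ) ^ (2 * (J : ℝ) * α / (1 + 2 * α)) :=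
    Real.rpow_pos_of_pos two_pos _
  calc (2 : ℝ) ^ (2 * (J : ℝ) * α / (1 + 2 * α)) *
      ∑' j : ℕ, (if J ≤ j then ∑ k ∈ Finset.range (2 ^ j), (bb α j k) ^ 2 else 0)
      ≤ (2 : ℝ) ^ (2 * (J : ℝ) * α / (1 + 2 * α)) * (rr α ^ J / (1 - rr α)) :=
        mul_le_mul_of_nonneg_left htail hpow.le
    _ = (1 - rr α)⁻¹ := by
        rw [rr_pow hα J, mul_div_assoc', ← Real.rpow_add two_pos]
        have h0 := hp0 hα
        have he : 2 * (J : ℝ) * α / (1 + 2 * α) + -(2 * α / (1 + 2 * α)) * (J:ℝ) = 0 := by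
          field_simp
          ring
        rw [he, Real.rpow_zero, one_div]

noncomputable def qq (α : ℝ) : ℝ := (2:ℝ) ^ ((1:ℝ)/(1+2*α))

lemma qq_gt_one (hα : 0 < α) : 1 < qq α := by
  rw [qq]
  refine (Real.one_lt_rpow_iff_of_pos two_pos).mpr (Or.inl ⟨one_lt_two, ?_⟩)
  have := hp0 hα; positivity

lemma qq_pow (hα : 0 < α) (L : ℕ) : qq α ^ L = (2:ℝ) ^ ((L:ℝ)/(1+2*α)) := by
  rw [qq, ← Real.rpow_natCast ((2:ℝ) ^ ((1:ℝ)/(1+2*α))) L,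
    ← Real.rpow_mul (by norm_num : (0:ℝ) ≤ 2)]
  congr 1
  ring

lemma bb_abs_le_one (hα : 0 < α) (j k : ℕ) : |bb α j k| ≤ 1 := by
  rw [bb]
  split_ifs
  · rw [abs_of_pos (Real.rpow_pos_of_pos two_pos _)]
    apply Real.rpow_le_one_of_one_le_of_nonpos one_le_two
    have h0 : (0:ℝ) ≤ (j:ℝ) := Nat.cast_nonneg j
    linarith
  · simp

lemma condW_bound (hα : 0 < α) (u : ℝ) (hu : 0 < u) :
    {q : ℕ × ℕ | q.2 < 2 ^ q.1 ∧ u < |bb α q.1 q.2|}.Finite ∧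
      u ^ (2 / (1 + 2 * α)) *
        ({q : ℕ × ℕ | q.2 < 2 ^ q.1 ∧ u < |bb α q.1 q.2|}.ncard : ℝ) ≤
        (2:ℝ) ^ ((2:ℝ)/(1+2*α)) / (qq α - 1) := by
  have hq1 := qq_gt_one hα
  have hCnn : (0:ℝ) ≤ (2:ℝ) ^ ((2:ℝ)/(1+2*α)) / (qq α - 1) := by
    have h1 : (0:ℝ) < (2:ℝ) ^ ((2:ℝ)/(1+2*α)) := Real.rpow_pos_of_pos two_pos _
    have h2 : (0:ℝ) < qq α - 1 := by linarith
    positivity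
  by_cases hu1 : 1 ≤ u
  · -- the set is empty
    have hempty : {q : ℕ × ℕ | q.2 < 2 ^ q.1 ∧ u < |bb α q.1 q.2|} = ∅ := by
      ext q
      simp only [Set.mem_setOf_eq, Set.mem_empty_iff_false, iff_false, not_and]
      intro _
      push_neg
      exact le_trans (bb_abs_le_one hα q.1 q.2) hu1
    rw [hempty]
    constructor
    · exact Set.finite_empty
    · simpa using hCnn
  · push_neg at hu1
    have hui : 1 < u⁻¹ := (one_lt_inv₀ hu).mpr hu1
    set L : ℕ := ⌊2 * Real.logb 2 u⁻¹⌋₊ + 1 with hL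
    have hlog_nn : 0 ≤ 2 * Real.logb 2 u⁻¹ := by
      have := Real.logb_nonneg one_lt_two hui.le
      linarith
    -- 2 ^ (-(L:ℝ)/2) < u
    have hLu : (2:ℝ) ^ (-(L:ℝ)/2) < u := by
      have h1 : 2 * Real.logb 2 u⁻¹ < (L:ℝ) := by
        rw [hL]; push_cast; exact Nat.lt_floor_add_one _
      have h2 : -(L:ℝ)/2 < Real.logb 2 u := by
        rw [Real.logb_inv] at h1
        linarith
      calc (2:ℝ) ^ (-(L:ℝ)/2) < (2:ℝ) ^ (Real.logb 2 u) :=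
            Real.rpow_lt_rpow_of_exponent_lt one_lt_two h2
        _ = u := Real.rpow_logb two_pos (by norm_num) hu
    -- containment in a finite set
    set F : Finset (ℕ × ℕ) :=
      (Finset.range L).biUnion (fun j => {j} ×ˢ Finset.range (mfun α j)) with hF
    have hsub : {q : ℕ × ℕ | q.2 < 2 ^ q.1 ∧ u < |bb α q.1 q.2|} ⊆ ↑F := by
      rintro ⟨j, k⟩ ⟨-, habs⟩
      have hk : k < mfun α j := by
        by_contra hk
        rw [bb, if_neg hk] at habs
        simp at habs
        linarith
      have habs' : u < (2:ℝ) ^ (-(j:ℝ)/2) := by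
        rwa [bb, if_pos hk, abs_of_pos (Real.rpow_pos_of_pos two_pos _)] at habs
      have hjL : j < L := by
        by_contra hjL
        push_neg at hjL
        have : (2:ℝ) ^ (-(j:ℝ)/2) ≤ (2:ℝ) ^ (-(L:ℝ)/2) := by
          apply Real.rpow_le_rpow_of_exponent_le one_le_two
          have : (L:ℝ) ≤ (j:ℝ) := Nat.cast_le.mpr hjL
          linarith
        linarith
      simp only [hF, Finset.coe_biUnion, Finset.mem_coe, Finset.mem_range, Set.mem_iUnion]
      exact ⟨j, hjL, by simp [Finset.mem_product, hk]⟩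
    refine ⟨Set.Finite.subset F.finite_toSet hsub, ?_⟩
    have hcard : ({q : ℕ × ℕ | q.2 < 2 ^ q.1 ∧ u < |bb α q.1 q.2|}.ncard : ℝ) ≤ (F.card : ℝ) := by
      exact_mod_cast Nat.cast_le.mpr
        (by
          have := Set.ncard_le_ncard hsub F.finite_toSet
          rwa [Set.ncard_coe_finset] at this)
    have hFcard : (F.card : ℝ) ≤ ∑ j ∈ Finset.range L, (mfun α j : ℝ) := by
      have h1 : F.card ≤ ∑ j ∈ Finset.range L, ({j} ×ˢ Finset.range (mfun α j)).card :=
        Finset.card_biUnion_le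
      have h2 : ∀ j, ({j} ×ˢ Finset.range (mfun α j)).card = mfun α j := by
        intro j
        rw [Finset.card_product, Finset.card_singleton, Finset.card_range, one_mul]
      calc (F.card : ℝ) ≤ ((∑ j ∈ Finset.range L, ({j} ×ˢ Finset.range (mfun α j)).card : ℕ) : ℝ) := by
            exact_mod_cast h1
        _ = ∑ j ∈ Finset.range L, (mfun α j : ℝ) := by
            push_cast
            exact Finset.sum_congr rfl fun j _ => by exact_mod_cast h2 j
    have hsum : ∑ j ∈ Finset.range L, (mfun α j : ℝ) ≤ qq α ^ L / (qq α - 1) := by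
      have h1 : ∑ j ∈ Finset.range L, (mfun α j : ℝ) ≤ ∑ j ∈ Finset.range L, qq α ^ j := by
        apply Finset.sum_le_sum
        intro j _
        rw [qq_pow hα j]
        exact mfun_le_rpow hα j
      have h2 : ∑ j ∈ Finset.range L, qq α ^ j = (qq α ^ L - 1)/(qq α - 1) :=
        geom_sum_eq (by linarith) L
      have h3 : (qq α ^ L - 1)/(qq α - 1) ≤ qq α ^ L / (qq α - 1) := by
        gcongr
        · linarith
      linarith
    have h0p := hp0 hα
    have hLle : (L:ℝ) ≤ 2 * Real.logb 2 u⁻¹ + 1 := by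
      rw [hL]; push_cast
      have := Nat.floor_le hlog_nn
      linarith
    have h2L : (2:ℝ) ^ ((L:ℝ)/2) ≤ 2 * u⁻¹ := by
      have h1 : (L:ℝ)/2 ≤ Real.logb 2 u⁻¹ + 1 := by linarith
      calc (2:ℝ) ^ ((L:ℝ)/2) ≤ (2:ℝ) ^ (Real.logb 2 u⁻¹ + 1) :=
            Real.rpow_le_rpow_of_exponent_le one_le_two h1
        _ = u⁻¹ * 2 := by
            rw [Real.rpow_add two_pos, Real.rpow_logb two_pos (by norm_num) (inv_pos.mpr hu),
              Real.rpow_one]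
        _ = 2 * u⁻¹ := by ring
    have hqqL : qq α ^ L ≤ (2 * u⁻¹) ^ ((2:ℝ)/(1+2*α)) := by
      have heq : qq α ^ L = ((2:ℝ) ^ ((L:ℝ)/2)) ^ ((2:ℝ)/(1+2*α)) := by
        rw [qq_pow hα L, ← Real.rpow_mul (by norm_num : (0:ℝ) ≤ 2)]
        congr 1
        field_simp
      rw [heq]
      exact Real.rpow_le_rpow (le_of_lt (Real.rpow_pos_of_pos two_pos _)) h2L (by positivity)
    have hcardle : ({q : ℕ × ℕ | q.2 < 2 ^ q.1 ∧ u < |bb α q.1 q.2|}.ncard : ℝ) ≤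
        (2 * u⁻¹) ^ ((2:ℝ)/(1+2*α)) / (qq α - 1) := by
      have hdiv : qq α ^ L / (qq α - 1) ≤ (2 * u⁻¹) ^ ((2:ℝ)/(1+2*α)) / (qq α - 1) := by
        gcongr
      linarith
    calc u ^ (2 / (1 + 2 * α)) *
        ({q : ℕ × ℕ | q.2 < 2 ^ q.1 ∧ u < |bb α q.1 q.2|}.ncard : ℝ)
        ≤ u ^ (2 / (1 + 2 * α)) * ((2 * u⁻¹) ^ ((2:ℝ)/(1+2*α)) / (qq α - 1)) := by
          apply mul_le_mul_of_nonneg_left hcardle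
          exact le_of_lt (Real.rpow_pos_of_pos hu _)
      _ = (2:ℝ) ^ ((2:ℝ)/(1+2*α)) / (qq α - 1) := by
          rw [mul_div_assoc', ← Real.mul_rpow hu.le (by positivity)]
          have huu : u * (2*u⁻¹) = 2 := by field_simp
          rw [huu]

/-! ### facts about `tTail` -/

lemma tTail_mem (β : ℕ → ℕ → ℝ) (θ : ℝ) (J j : ℕ) :
    (∑ k ∈ Finset.range (2^j) \ Finset.range (NJj θ J j), (β j k)^2) ∈
      {x : ℝ | ∃ A : Finset ℕ, A ⊆ Finset.range (2 ^ j) ∧ A.card = NJj θ J j ∧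
        x = ∑ k ∈ Finset.range (2 ^ j) \ A, (β j k) ^ 2} := by
  exact ⟨Finset.range (NJj θ J j),
    Finset.range_subset_range.mpr (min_le_right _ _), Finset.card_range _, rfl⟩

lemma tTail_bddBelow (β : ℕ → ℕ → ℝ) (θ : ℝ) (J j : ℕ) :
    BddBelow {x : ℝ | ∃ A : Finset ℕ, A ⊆ Finset.range (2 ^ j) ∧ A.card = NJj θ J j ∧
        x = ∑ k ∈ Finset.range (2 ^ j) \ A, (β j k) ^ 2} := by
  refine ⟨0, ?_⟩
  rintro x ⟨A, -, -, rfl⟩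
  exact Finset.sum_nonneg fun k _ => sq_nonneg _

lemma tTail_nonneg (β : ℕ → ℕ → ℝ) (θ : ℝ) (J j : ℕ) : 0 ≤ tTail β θ J j := by
  apply le_csInf ⟨_, tTail_mem β θ J j⟩
  rintro x ⟨A, -, -, rfl⟩
  exact Finset.sum_nonneg fun k _ => sq_nonneg _

lemma tTail_le_sum (β : ℕ → ℕ → ℝ) (θ : ℝ) (J j : ℕ) :
    tTail β θ J j ≤ ∑ k ∈ Finset.range (2^j), (β j k)^2 := by
  refine le_trans (csInf_le (tTail_bddBelow β θ J j) (tTail_mem β θ J j)) ?_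
  exact Finset.sum_le_sum_of_subset_of_nonneg Finset.sdiff_subset
    (fun k _ _ => sq_nonneg _)

lemma tTail_ge (hα : 0 < α) (θ : ℝ) (J j : ℕ) :
    ((mfun α j : ℝ) - (NJj θ J j : ℝ)) * (2:ℝ)^(-(j:ℝ)) ≤ tTail (bb α) θ J j := by
  apply le_csInf ⟨_, tTail_mem (bb α) θ J j⟩
  rintro x ⟨A, hsub, hcard, rfl⟩
  have h1 : Finset.range (mfun α j) \ A ⊆ Finset.range (2^j) \ A :=
    Finset.sdiff_subset_sdiff (Finset.range_subset_range.mpr (mfun_le hα j)) le_rfl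
  have h2 : ∑ k ∈ Finset.range (mfun α j) \ A, (bb α j k)^2 ≤
      ∑ k ∈ Finset.range (2^j) \ A, (bb α j k)^2 :=
    Finset.sum_le_sum_of_subset_of_nonneg h1 (fun k _ _ => sq_nonneg _)
  have h3 : ∑ k ∈ Finset.range (mfun α j) \ A, (bb α j k)^2 =
      ((Finset.range (mfun α j) \ A).card : ℝ) * (2:ℝ)^(-(j:ℝ)) := by
    rw [Finset.sum_congr rfl (fun k hk => ?_), Finset.sum_const, nsmul_eq_mul]
    have hk' : k < mfun α j := by
      have := (Finset.mem_sdiff.mp hk).1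
      simpa [Finset.mem_range] using this
    rw [bb, if_pos hk', sq_val]
  have h4 : (mfun α j : ℝ) - (NJj θ J j : ℝ) ≤ ((Finset.range (mfun α j) \ A).card : ℝ) := by
    have hnat : mfun α j - A.card ≤ (Finset.range (mfun α j) \ A).card := by
      have := Finset.le_card_sdiff A (Finset.range (mfun α j))
      simpa [Finset.card_range] using this
    have hcast : (mfun α j : ℝ) - (A.card : ℝ) ≤ ((mfun α j - A.card : ℕ) : ℝ) := by
      rcases le_total A.card (mfun α j) with h | h
      · rw [Nat.cast_sub h]
      · have h5 : mfun α j - A.card = 0 := Nat.sub_eq_zero_of_le h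
        have h6 : (mfun α j : ℝ) ≤ (A.card : ℝ) := Nat.cast_le.mpr h
        rw [h5]
        simpa using h6
    rw [← hcard]
    exact le_trans hcast (Nat.cast_le.mpr hnat)
  calc ((mfun α j : ℝ) - (NJj θ J j : ℝ)) * (2:ℝ)^(-(j:ℝ))
      ≤ ((Finset.range (mfun α j) \ A).card : ℝ) * (2:ℝ)^(-(j:ℝ)) :=
        mul_le_mul_of_nonneg_right h4 (le_of_lt (Real.rpow_pos_of_pos two_pos _))
    _ = ∑ k ∈ Finset.range (mfun α j) \ A, (bb α j k)^2 := h3.symm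
    _ ≤ _ := h2

lemma NJj_le_real (θ : ℝ) (J j : ℕ) (hjJ : J ≤ j) :
    (NJj θ J j : ℝ) ≤ (2:ℝ)^J * ((j:ℝ) - (J:ℝ) + 1) ^ (-θ) := by
  have hpos : (0:ℝ) ≤ (2:ℝ)^J * ((j:ℝ) - (J:ℝ) + 1) ^ (-θ) := by
    have h1 : (0:ℝ) < (j:ℝ) - (J:ℝ) + 1 := by
      have : (J:ℝ) ≤ (j:ℝ) := Nat.cast_le.mpr hjJ
      linarith
    have h2 : (0:ℝ) < ((j:ℝ) - (J:ℝ) + 1) ^ (-θ) := Real.rpow_pos_of_pos h1 _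
    positivity
  calc (NJj θ J j : ℝ) ≤ (⌊(2 : ℝ) ^ J * ((j : ℝ) - (J : ℝ) + 1) ^ (-θ)⌋₊ : ℝ) :=
        Nat.cast_le.mpr (min_le_left _ _)
    _ ≤ _ := Nat.floor_le hpos

lemma tTail_summable (hα : 0 < α) (θ : ℝ) (J : ℕ) :
    Summable (fun j : ℕ => if J ≤ j then tTail (bb α) θ J j else 0) := by
  apply Summable.of_nonneg_of_le (fun j => ?_) (fun j => ?_)
    (summable_geometric_of_lt_one (rr_pos hα).le (rr_lt_one hα))
  · split_ifs
    · exact tTail_nonneg _ _ _ _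
    · exact le_rfl
  · split_ifs
    · exact le_trans (tTail_le_sum _ _ _ _) (sum_sq_le hα j)
    · exact pow_nonneg (rr_pos hα).le j

lemma not_condA_aux (hα : 0 < α) {θ : ℝ} (hθ : 2 < θ) (C : ℝ)
    (hC : ∀ J : ℕ, (2 : ℝ) ^ (2 * (J : ℝ) * α) *
      ∑' j : ℕ, (if J ≤ j then tTail (bb α) θ J j else 0) ≤ C) : False := by
  have h0p := hp0 hα
  obtain ⟨d, hd⟩ := pow_unbounded_of_one_lt (4*C)
    ((Real.one_lt_rpow_iff_of_pos two_pos).mpr (Or.inl ⟨one_lt_two, by positivity⟩) :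
      (1:ℝ) < (2:ℝ)^(2*α))
  obtain ⟨j, hj⟩ := exists_nat_ge (max (1+2*α)
    ((1+2*α) * ((d:ℝ) + 2 + 2^(d+3)) / (2*α)))
  have hjp : (1+2*α) ≤ (j:ℝ) := le_trans (le_max_left _ _) hj
  have hjd : (j:ℝ) * (2*α) / (1+2*α) ≥ (d:ℝ) + 2 + 2^(d+3) := by
    have := le_trans (le_max_right _ _) hj
    rw [ge_iff_le, le_div_iff₀ h0p]
    calc ((d:ℝ) + 2 + 2^(d+3)) * (1+2*α)
        = (1+2*α) * ((d:ℝ) + 2 + 2^(d+3)) := by ring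
      _ ≤ (j:ℝ) * (2*α) := by
          rw [div_le_iff₀ (by positivity : (0:ℝ) < 2*α)] at this
          linarith
  set J : ℕ := ⌊(j:ℝ)/(1+2*α)⌋₊ + 1 + d with hJdef
  have hfl : (0:ℝ) ≤ (j:ℝ)/(1+2*α) := by positivity
  have hJub : (J:ℝ) ≤ (j:ℝ)/(1+2*α) + 1 + d := by
    rw [hJdef]
    push_cast
    have := Nat.floor_le hfl
    linarith
  have hJlb : (j:ℝ)/(1+2*α) + d ≤ (J:ℝ) := by
    rw [hJdef]
    push_cast
    have := Nat.lt_floor_add_one ((j:ℝ)/(1+2*α))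
    linarith
  have h2pow : (1:ℝ) ≤ (2:ℝ)^(d+3) := one_le_pow₀ one_le_two
  have hJj : J ≤ j := by
    rw [← Nat.cast_le (α := ℝ)]
    have h1 : (j:ℝ) - (j:ℝ)/(1+2*α) = (j:ℝ)*(2*α)/(1+2*α) := by
      field_simp
      ring
    nlinarith [hJub]
  have hjJ1 : (2:ℝ)^(d+3) ≤ (j:ℝ) - (J:ℝ) + 1 := by
    have h1 : (j:ℝ) - (j:ℝ)/(1+2*α) = (j:ℝ)*(2*α)/(1+2*α) := by
      field_simp
      ring
    nlinarith [hJub]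
  set X : ℝ := (2:ℝ)^((j:ℝ)/(1+2*α)) with hX
  have hXpos : 0 < X := Real.rpow_pos_of_pos two_pos _
  have hX2 : (2:ℝ) ≤ X := by
    rw [hX]
    calc (2:ℝ) = (2:ℝ)^(1:ℝ) := (Real.rpow_one 2).symm
      _ ≤ _ := Real.rpow_le_rpow_of_exponent_le one_le_two
          (by rw [le_div_iff₀ h0p]; linarith)
  have hmf : mfun α j = ⌊X⌋₊ := by rw [mfun, hX]
  have hm : X/2 ≤ (mfun α j : ℝ) := by
    have h1 : X - 1 < (⌊X⌋₊ : ℝ) := Nat.sub_one_lt_floor X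
    rw [hmf]
    linarith
  have hN : (NJj θ J j : ℝ) ≤ X/4 := by
    have h1 := NJj_le_real θ J j hJj
    have hjJpos : (0:ℝ) < (j:ℝ) - (J:ℝ) + 1 := by
      have : (J:ℝ) ≤ (j:ℝ) := Nat.cast_le.mpr hJj
      linarith
    have h2 : ((j:ℝ) - (J:ℝ) + 1) ^ (-θ) ≤ ((2:ℝ)^(d+3))⁻¹ := by
      rw [Real.rpow_neg hjJpos.le]
      apply inv_anti₀ (by positivity)
      calc (2:ℝ)^(d+3) ≤ (j:ℝ)-(J:ℝ)+1 := hjJ1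
        _ = ((j:ℝ)-(J:ℝ)+1)^(1:ℝ) := (Real.rpow_one _).symm
        _ ≤ ((j:ℝ)-(J:ℝ)+1)^θ := Real.rpow_le_rpow_of_exponent_le
            (by linarith) (by linarith)
    have h3 : ((2:ℝ)^J : ℝ) ≤ X * (2:ℝ)^(1+d) := by
      have hcast : ((2:ℝ)^J) = (2:ℝ)^((J:ℝ)) := (Real.rpow_natCast 2 J).symm
      rw [hcast]
      calc (2:ℝ)^((J:ℝ)) ≤ (2:ℝ)^((j:ℝ)/(1+2*α) + ((1+d : ℕ):ℝ)) :=
            Real.rpow_le_rpow_of_exponent_le one_le_two (by push_cast; linarith)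
        _ = X * (2:ℝ)^(1+d) := by rw [Real.rpow_add two_pos, Real.rpow_natCast, hX]
    calc (NJj θ J j : ℝ) ≤ (2:ℝ)^J * ((j:ℝ)-(J:ℝ)+1)^(-θ) := h1
      _ ≤ (X * (2:ℝ)^(1+d)) * ((2:ℝ)^(d+3))⁻¹ := by
          apply mul_le_mul h3 h2 (le_of_lt (Real.rpow_pos_of_pos hjJpos _))
          positivity
      _ = X/4 := by
          have he : (2:ℝ)^(d+3) = (2:ℝ)^(1+d) * 4 := by
            rw [show d+3 = (1+d)+2 by ring, pow_add]
            norm_num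
          rw [he]
          have h4 : ((2:ℝ)^(1+d)) ≠ 0 := by positivity
          field_simp
  have htt : X/4 * (2:ℝ)^(-(j:ℝ)) ≤ tTail (bb α) θ J j := by
    refine le_trans ?_ (tTail_ge hα θ J j)
    apply mul_le_mul_of_nonneg_right ?_ (Real.rpow_pos_of_pos two_pos _).le
    linarith
  have hts : tTail (bb α) θ J j ≤ ∑' j' : ℕ, (if J ≤ j' then tTail (bb α) θ J j' else 0) := by
    have h := Summable.le_tsum (tTail_summable hα θ J) j (fun i _ => by
      split_ifs with h
      · exact tTail_nonneg _ _ _ _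
      · exact le_rfl)
    rwa [if_pos hJj] at h
  have hprodnn : (0:ℝ) ≤ X/4 * (2:ℝ)^(-(j:ℝ)) := by
    apply mul_nonneg (by linarith) (Real.rpow_pos_of_pos two_pos _).le
  have hkey : ((2:ℝ)^(2*α))^d / 4 ≤ (2 : ℝ) ^ (2 * (J : ℝ) * α) * (X/4 * (2:ℝ)^(-(j:ℝ))) := by
    have e1 : ((2:ℝ)^(2*α))^d = (2:ℝ)^(2*α*(d:ℝ)) := by
      rw [← Real.rpow_natCast ((2:ℝ)^(2*α)) d, ← Real.rpow_mul (by norm_num : (0:ℝ) ≤ 2)]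
    have e2 : (2:ℝ)^(2*α*((j:ℝ)/(1+2*α) + (d:ℝ))) ≤ (2 : ℝ) ^ (2 * (J : ℝ) * α) :=
      Real.rpow_le_rpow_of_exponent_le one_le_two (by nlinarith)
    have e3 : (2:ℝ)^(2*α*((j:ℝ)/(1+2*α) + (d:ℝ))) * (X/4 * (2:ℝ)^(-(j:ℝ))) =
        (2:ℝ)^(2*α*(d:ℝ))/4 := by
      rw [hX]
      have hre : (2:ℝ)^(2*α*((j:ℝ)/(1+2*α) + (d:ℝ))) *
          ((2:ℝ)^((j:ℝ)/(1+2*α))/4 * (2:ℝ)^(-(j:ℝ))) =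
          ((2:ℝ)^(2*α*((j:ℝ)/(1+2*α) + (d:ℝ))) * (2:ℝ)^((j:ℝ)/(1+2*α)) *
            (2:ℝ)^(-(j:ℝ)))/4 := by ring
      rw [hre, ← Real.rpow_add two_pos, ← Real.rpow_add two_pos]
      have hexp : 2*α*((j:ℝ)/(1+2*α) + (d:ℝ)) + (j:ℝ)/(1+2*α) + -(j:ℝ) = 2*α*(d:ℝ) := by
        field_simp
        ring
      rw [hexp]
    calc ((2:ℝ)^(2*α))^d / 4
        = (2:ℝ)^(2*α*((j:ℝ)/(1+2*α)+(d:ℝ))) * (X/4 * (2:ℝ)^(-(j:ℝ))) := by rw [e1, ← e3]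
      _ ≤ (2 : ℝ) ^ (2 * (J : ℝ) * α) * (X/4 * (2:ℝ)^(-(j:ℝ))) :=
          mul_le_mul_of_nonneg_right e2 hprodnn
  have hfin : (2 : ℝ) ^ (2 * (J : ℝ) * α) * (X/4 * (2:ℝ)^(-(j:ℝ))) ≤ C := by
    refine le_trans ?_ (hC J)
    exact mul_le_mul_of_nonneg_left (le_trans htt hts) (Real.rpow_pos_of_pos two_pos _).le
  have : ((2:ℝ)^(2*α))^d ≤ 4*C := by nlinarith
  linarith

end Stmt18Aux

/-- the non-embedding `B^{α/(1+2α)}_{2,∞} ∩ W_{2/(1+2α)} ⊄ A^α_θ`. -/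
theorem stmt_18 (α θ : ℝ) (hα : 0 < α) (hθ : 2 < θ) :
    (∃ β : ℕ → ℕ → ℝ, SqSummable β ∧ CondB2 β α ∧ CondW β α ∧ ¬ CondA β α θ) ∧
      ¬ (∀ β : ℕ → ℕ → ℝ, SqSummable β → CondB2 β α → CondW β α → CondA β α θ) := by
  have hmain : ∃ β : ℕ → ℕ → ℝ, SqSummable β ∧ CondB2 β α ∧ CondW β α ∧ ¬ CondA β α θ := by
    refine ⟨Stmt18Aux.bb α, ?_, ?_, ?_, ?_⟩
    · exact Stmt18Aux.sq_summable hα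
    · exact ⟨(1 - Stmt18Aux.rr α)⁻¹, fun J => Stmt18Aux.condB2_bound hα J⟩
    · exact ⟨(2:ℝ) ^ ((2:ℝ)/(1+2*α)) / (Stmt18Aux.qq α - 1),
        fun u hu => Stmt18Aux.condW_bound hα u hu⟩
    · rintro ⟨C, hC⟩
      exact Stmt18Aux.not_condA_aux hα hθ C hC
  refine ⟨hmain, fun h => ?_⟩
  obtain ⟨β, h1, h2, h3, h4⟩ := hmain
  exact h4 (h β h1 h2 h3)
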